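/- For every l ∈ ℕ and every ε > 0 there exists δ > 0 with the following property: for every standard Borel probability space (X, 𝔅, μ), every finite measurable partition P = {P₁, …, P_l} of X with at most l atoms, and every sub-σ-algebra 𝔉 ⊆ 𝔅 with H_μ(P|𝔉) > H_μ(P) − δ, the set of points z ∈ X for which the disintegration measure μ_z of μ over 𝔉 satisfies Σ_{i=1}^{l} |μ(Pᵢ) − μ_z(Pᵢ)| < ε has μ-measure at least 1 − ε. -/

import Mathlib

open MeasureTheory ProbabilityTheory

/-- `P` is a finite measurable partition of `X` (indexed by a finite index type). -/
structure IsPartition {X : Type*} [mX : MeasurableSpace X] {ι : Type*} (P : ι → Set X) :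
    Prop where
  meas : ∀ i, MeasurableSet (P i)
  disj : Pairwise (Function.onFun Disjoint P)
  cover : ⋃ i, P i = Set.univ

/-- The Shannon entropy (base 2) of the probability vector of a finite partition `P`
with respect to `μ`. -/
noncomputable def entropyH {X : Type*} [mX : MeasurableSpace X] {ι : Type*} [Fintype ι]
    (μ : Measure X) (P : ι → Set X) : ℝ :=
  - ∑ i, (μ (P i)).toReal * Real.logb 2 (μ (P i)).toReal

/-- The conditional entropy `H_μ(P | 𝔉) = ∑_{A ∈ P} ∫ φ(μ[1_A | 𝔉]) dμ` of a finite
partition `P` given a σ-algebra `F`, where `φ(t) = -t log₂ t`. -/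
noncomputable def condEntropyAlg {X : Type*} [mX : MeasurableSpace X] (μ : Measure X)
    (F : MeasurableSpace X) {ι : Type*} [Fintype ι] (P : ι → Set X) : ℝ :=
  ∑ i, ∫ x, -((μ[(P i).indicator (fun _ => (1 : ℝ)) | F]) x *
      Real.logb 2 ((μ[(P i).indicator (fun _ => (1 : ℝ)) | F]) x)) ∂μ

open scoped ENNReal NNReal
private lemma hasDerivAt_G {b : ℝ} {x : ℝ} (hx : x ≠ 0) :
    HasDerivAt (fun t : ℝ => t * Real.log t - t * Real.log b - (t - b) - (t - b)^2 / 2)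
      (Real.log x - Real.log b - (x - b)) x := by
  have h1 := Real.hasDerivAt_mul_log hx
  have h2 : HasDerivAt (fun t : ℝ => t * Real.log b) (Real.log b) x := by
    simpa using (hasDerivAt_id x).mul_const (Real.log b)
  have h3 : HasDerivAt (fun t : ℝ => t - b) 1 x := (hasDerivAt_id x).sub_const b
  have h4 : HasDerivAt (fun t : ℝ => (t - b)^2 / 2) ((x - b)) x := by
    have := (h3.pow 2).div_const 2
    simpa using this.congr_deriv (by ring)
  have := ((h1.sub h2).sub h3).sub h4
  refine this.congr_deriv ?_
  ring

private lemma key_G_nonneg {b t : ℝ} (hb0 : 0 < b) (hb1 : b ≤ 1) (ht0 : 0 ≤ t) (ht1 : t ≤ 1) :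
    0 ≤ t * Real.log t - t * Real.log b - (t - b) - (t - b)^2 / 2 := by
  set G : ℝ → ℝ := fun t => t * Real.log t - t * Real.log b - (t - b) - (t - b)^2 / 2 with hG
  have hGb : G b = 0 := by simp [hG]
  have hcont : Continuous G := by
    have := Real.continuous_mul_log
    fun_prop
  rcases le_or_gt t b with h | h
  · have hanti : AntitoneOn G (Set.Icc 0 b) := by
      apply antitoneOn_of_deriv_nonpos (convex_Icc 0 b) hcont.continuousOn
      · intro x hx
        rw [interior_Icc] at hx
        exact (hasDerivAt_G (ne_of_gt hx.1)).differentiableAt.differentiableWithinAt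
      · intro x hx
        rw [interior_Icc] at hx
        rw [(hasDerivAt_G (ne_of_gt hx.1)).deriv]
        have hlog : Real.log x - Real.log b ≤ (x - b) / b := by
          have h5 : Real.log (x / b) ≤ x / b - 1 :=
            Real.log_le_sub_one_of_pos (div_pos hx.1 hb0)
          rw [Real.log_div (ne_of_gt hx.1) (ne_of_gt hb0)] at h5
          have h6 : x / b - 1 = (x - b) / b := by field_simp
          linarith
        have hxb : x - b ≤ 0 := by linarith [hx.2]
        have : (x - b) / b ≤ x - b := by
          rw [div_le_iff₀ hb0]
          nlinarith
        linarith
    have := hanti ⟨ht0, h⟩ ⟨le_of_lt hb0, le_refl b⟩ h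
    rw [hGb] at this
    simpa [hG] using this
  · have hmono : MonotoneOn G (Set.Icc b 1) := by
      apply monotoneOn_of_deriv_nonneg (convex_Icc b 1) hcont.continuousOn
      · intro x hx
        rw [interior_Icc] at hx
        have : (0:ℝ) < x := lt_trans hb0 hx.1
        exact (hasDerivAt_G (ne_of_gt this)).differentiableAt.differentiableWithinAt
      · intro x hx
        rw [interior_Icc] at hx
        have hx0 : (0:ℝ) < x := lt_trans hb0 hx.1
        rw [(hasDerivAt_G (ne_of_gt hx0)).deriv]
        have hlog : (x - b) / x ≤ Real.log x - Real.log b := by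
          have h5 : Real.log (b / x) ≤ b / x - 1 :=
            Real.log_le_sub_one_of_pos (div_pos hb0 hx0)
          rw [Real.log_div (ne_of_gt hb0) (ne_of_gt hx0)] at h5
          have h6 : b / x - 1 = -((x - b) / x) := by field_simp; ring
          linarith
        have hxb : 0 ≤ x - b := by linarith [hx.1]
        have : x - b ≤ (x - b) / x := by
          rw [le_div_iff₀ hx0]
          nlinarith [hx.2]
        linarith
    have := hmono ⟨le_refl b, hb1⟩ ⟨le_of_lt h, ht1⟩ (le_of_lt h)
    rw [hGb] at this
    simpa [hG] using this

private lemma key_ineq {b t : ℝ} (hb0 : 0 < b) (hb1 : b ≤ 1) (ht0 : 0 ≤ t) (ht1 : t ≤ 1) :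
    -(t * Real.log t) ≤ -(b * Real.log b) - (Real.log b + 1) * (t - b) - (t - b)^2 / 2 := by
  have h := key_G_nonneg hb0 hb1 ht0 ht1
  nlinarith [h]

private lemma aux_main {X : Type} {F : MeasurableSpace X} [mX : MeasurableSpace X]
    [StandardBorelSpace X] (μ : Measure X) [IsProbabilityMeasure μ] (hF : F ≤ mX)
    {l : ℕ} (ε : ℝ) (hε : 0 < ε) (P : Fin l → Set X) (hP : ∀ i, MeasurableSet (P i))
    (hcond : condEntropyAlg μ F P > entropyH μ P - ε ^ 3 / (2 * ((l : ℝ) + 1) * Real.log 2)) :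
    ENNReal.ofReal (1 - ε) ≤ μ {z : X | ∑ i : Fin l,
      |(μ (P i)).toReal - (condExpKernel μ F z (P i)).toReal| < ε} := by
  have hlog2 : (0:ℝ) < Real.log 2 := Real.log_pos one_lt_two
  have hl1 : (0:ℝ) < (l : ℝ) + 1 := by positivity
  set g : Fin l → X → ℝ := fun i z => (condExpKernel μ F z (P i)).toReal with hg
  set b : Fin l → ℝ := fun i => (μ (P i)).toReal with hb
  -- basic facts
  have hg_meas : ∀ i, Measurable (g i) := fun i =>
    ((measurable_condExpKernel (hP i)).mono hF le_rfl).ennreal_toReal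
  have hg0 : ∀ i z, 0 ≤ g i z := fun i z => ENNReal.toReal_nonneg
  have hg1 : ∀ i z, g i z ≤ 1 := by
    intro i z
    have h1 : condExpKernel μ F z (P i) ≤ 1 := prob_le_one
    calc (condExpKernel μ F z (P i)).toReal ≤ (1:ℝ≥0∞).toReal :=
          ENNReal.toReal_mono ENNReal.one_ne_top h1
      _ = 1 := by simp
  have hb0 : ∀ i, 0 ≤ b i := fun i => ENNReal.toReal_nonneg
  have hb1 : ∀ i, b i ≤ 1 := by
    intro i
    calc (μ (P i)).toReal ≤ (1:ℝ≥0∞).toReal := ENNReal.toReal_mono ENNReal.one_ne_top prob_le_one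
      _ = 1 := by simp
  have hgae : ∀ i, g i =ᵐ[μ] μ[(P i).indicator (fun _ => (1 : ℝ)) | F] := fun i =>
    condExpKernel_ae_eq_condExp hF (hP i)
  have hg_int : ∀ i, Integrable (g i) μ := fun i => integrable_toReal_condExpKernel (hP i)
  have hgint : ∀ i, ∫ z, g i z ∂μ = b i := by
    intro i
    rw [integral_congr_ae (hgae i), integral_condExp hF, integral_indicator_const (1:ℝ) (hP i)]
    simp [hb, measureReal_def]
  have hvar_int : ∀ i, Integrable (fun z => (g i z - b i)^2) μ := by
    intro i
    refine Integrable.mono' (integrable_const 1) ?_ ?_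
    · exact (((hg_meas i).sub measurable_const).pow_const 2).aestronglyMeasurable
    · filter_upwards with z
      rw [Real.norm_eq_abs, abs_of_nonneg (sq_nonneg _)]
      nlinarith [hg0 i z, hg1 i z, hb0 i, hb1 i]
  have hφ_int : ∀ i, Integrable (fun z => -(g i z * Real.log (g i z))) μ := by
    intro i
    refine Integrable.mono' (integrable_const 1) ?_ ?_
    · exact ((Real.continuous_mul_log.measurable.comp (hg_meas i)).neg).aestronglyMeasurable
    · filter_upwards with z
      rw [Real.norm_eq_abs, abs_neg]
      rcases eq_or_lt_of_le (hg0 i z) with h | h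
      · simp [← h]
      · rw [mul_comm]
        exact le_of_lt (Real.abs_log_mul_self_lt (g i z) h (hg1 i z))
  -- the per-atom concavity-defect inequality
  have key : ∀ i, ∫ z, -(g i z * Real.log (g i z)) ∂μ ≤
      -(b i * Real.log (b i)) - (∫ z, (g i z - b i)^2 ∂μ) / 2 := by
    intro i
    by_cases hbi : μ (P i) = 0
    · have hbz : b i = 0 := by simp [hb, hbi]
      have hind : (P i).indicator (fun _ => (1 : ℝ)) =ᵐ[μ] 0 := by
        filter_upwards [measure_eq_zero_iff_ae_notMem.mp hbi] with z hz
        simp [Set.indicator_of_notMem hz]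
      have hgz : g i =ᵐ[μ] 0 := by
        refine (hgae i).trans ((condExp_congr_ae hind).trans ?_)
        rw [condExp_zero]
      have he1 : (fun z => -(g i z * Real.log (g i z))) =ᵐ[μ] (fun _ => (0:ℝ)) := by
        filter_upwards [hgz] with z hz
        simp [hz]
      have he2 : (fun z => (g i z - b i)^2) =ᵐ[μ] (fun _ => (0:ℝ)) := by
        filter_upwards [hgz] with z hz
        simp [hz, hbz]
      have h1 : ∫ z, -(g i z * Real.log (g i z)) ∂μ = 0 := by
        rw [integral_congr_ae he1]; simp
      have h2 : ∫ z, (g i z - b i)^2 ∂μ = 0 := by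
        rw [integral_congr_ae he2]; simp
      rw [h1, h2, hbz]
      simp
    · have hbpos : 0 < b i := ENNReal.toReal_pos hbi (measure_ne_top μ _)
      have hptwise : ∀ z, -(g i z * Real.log (g i z)) ≤
          (-(b i * Real.log (b i)) - (Real.log (b i) + 1) * (g i z - b i)) -
            (g i z - b i)^2 / 2 := by
        intro z
        have := key_ineq hbpos (hb1 i) (hg0 i z) (hg1 i z)
        linarith
      have hA : Integrable (fun z => -(b i * Real.log (b i)) -
          (Real.log (b i) + 1) * (g i z - b i)) μ :=
        (integrable_const _).sub (((hg_int i).sub (integrable_const _)).const_mul _)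
      have hB : Integrable (fun z => (g i z - b i)^2 / 2) μ := (hvar_int i).div_const 2
      calc ∫ z, -(g i z * Real.log (g i z)) ∂μ
          ≤ ∫ z, ((-(b i * Real.log (b i)) - (Real.log (b i) + 1) * (g i z - b i)) -
              (g i z - b i)^2 / 2) ∂μ :=
            integral_mono (hφ_int i) (hA.sub hB) hptwise
        _ = -(b i * Real.log (b i)) - (∫ z, (g i z - b i)^2 ∂μ) / 2 := by
            have hgb : Integrable (fun z => g i z - b i) μ :=
              (hg_int i).sub (integrable_const _)
            have hc : Integrable (fun z => (Real.log (b i) + 1) * (g i z - b i)) μ :=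
              hgb.const_mul _
            have hstep : ∫ z, (-(b i * Real.log (b i)) -
                (Real.log (b i) + 1) * (g i z - b i)) ∂μ = -(b i * Real.log (b i)) := by
              rw [integral_sub (integrable_const _) hc,
                integral_const_mul, integral_sub (hg_int i) (integrable_const _),
                hgint i, integral_const]
              simp
            rw [integral_sub hA hB, hstep, integral_div]
  -- rewrite the entropies
  have hCE : condEntropyAlg μ F P =
      (∑ i, ∫ z, -(g i z * Real.log (g i z)) ∂μ) / Real.log 2 := by
    rw [condEntropyAlg, Finset.sum_div]
    refine Finset.sum_congr rfl fun i _ => ?_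
    rw [← integral_div]
    apply integral_congr_ae
    filter_upwards [hgae i] with z hz
    rw [← hz]
    simp only [Real.logb]
    ring
  have hEH : entropyH μ P = (∑ i, -(b i * Real.log (b i))) / Real.log 2 := by
    rw [entropyH, Finset.sum_div, ← Finset.sum_neg_distrib]
    refine Finset.sum_congr rfl fun i _ => ?_
    simp only [Real.logb, hb]
    ring
  -- derive the variance bound
  set V : Fin l → ℝ := fun i => ∫ z, (g i z - b i)^2 ∂μ with hV
  have hVnonneg : ∀ i, 0 ≤ V i := fun i => integral_nonneg fun z => sq_nonneg _
  have hsumV : ∑ i, V i < ε ^ 3 / ((l : ℝ) + 1) := by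
    have h1 : (∑ i, ∫ z, -(g i z * Real.log (g i z)) ∂μ) ≤
        ∑ i, (-(b i * Real.log (b i)) - V i / 2) := Finset.sum_le_sum fun i _ => key i
    rw [hCE, hEH] at hcond
    have h2 : (∑ i, -(b i * Real.log (b i))) - (∑ i, ∫ z, -(g i z * Real.log (g i z)) ∂μ) <
        ε ^ 3 / (2 * ((l : ℝ) + 1)) := by
      rw [show ε ^ 3 / (2 * ((l : ℝ) + 1) * Real.log 2) =
          (ε ^ 3 / (2 * ((l : ℝ) + 1))) / Real.log 2 by rw [div_div]] at hcond
      have h3 : ((∑ i, -(b i * Real.log (b i))) -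
          (∑ i, ∫ z, -(g i z * Real.log (g i z)) ∂μ)) / Real.log 2 <
          (ε ^ 3 / (2 * ((l : ℝ) + 1))) / Real.log 2 := by
        rw [sub_div]
        linarith
      exact (div_lt_div_iff_of_pos_right hlog2).mp h3
    have h4 : ∑ i, (-(b i * Real.log (b i)) - V i / 2) =
        (∑ i, -(b i * Real.log (b i))) - (∑ i, V i) / 2 := by
      rw [Finset.sum_sub_distrib, Finset.sum_div]
    have h5 : (∑ i, V i) / 2 < ε ^ 3 / (2 * ((l : ℝ) + 1)) := by
      rw [h4] at h1
      linarith
    have h6 : ∑ i, V i < 2 * (ε ^ 3 / (2 * ((l : ℝ) + 1))) := by linarith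
    rw [show 2 * (ε ^ 3 / (2 * ((l : ℝ) + 1))) = ε ^ 3 / ((l : ℝ) + 1) from by
      field_simp] at h6
    exact h6
  -- Markov / Chebyshev step
  set h : X → ℝ := fun z => ∑ i, (g i z - b i)^2 with hh
  have hh_int : Integrable h μ := integrable_finset_sum _ (fun i _ => hvar_int i)
  have hh_nonneg : ∀ z, 0 ≤ h z := fun z => Finset.sum_nonneg fun i _ => sq_nonneg _
  have hinth : ∫ z, h z ∂μ = ∑ i, V i := integral_finset_sum _ (fun i _ => hvar_int i)
  set a : ℝ := ε ^ 2 / ((l : ℝ) + 1) with ha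
  have ha0 : 0 < a := by positivity
  set S : Set X := {z : X | ∑ i : Fin l, |b i - g i z| < ε} with hS
  have hS_meas : MeasurableSet S := by
    apply measurableSet_lt ?_ measurable_const
    exact Finset.measurable_sum _ fun i _ => (measurable_const.sub (hg_meas i)).abs
  have hsub : Sᶜ ⊆ {z | a ≤ h z} := by
    intro z hz
    simp only [hS, Set.mem_compl_iff, Set.mem_setOf_eq, not_lt] at hz
    have hcs : (∑ i : Fin l, |b i - g i z|) ^ 2 ≤ (l : ℝ) * h z := by
      have hcs' := sq_sum_le_card_mul_sum_sq (s := (Finset.univ : Finset (Fin l)))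
        (f := fun i => |b i - g i z|)
      have hflip : ∀ i : Fin l, (b i - g i z) ^ 2 = (g i z - b i) ^ 2 := fun i => by ring
      simpa [sq_abs, hh, hflip] using hcs'
    have hε2 : ε ^ 2 ≤ (∑ i : Fin l, |b i - g i z|) ^ 2 := by
      have hnn : 0 ≤ ∑ i : Fin l, |b i - g i z| :=
        Finset.sum_nonneg fun i _ => abs_nonneg _
      nlinarith
    have hhz : 0 ≤ h z := hh_nonneg z
    show a ≤ h z
    rw [ha, div_le_iff₀ hl1]
    nlinarith
  have hmark := mul_meas_ge_le_integral_of_nonneg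
    (Filter.Eventually.of_forall hh_nonneg) hh_int a
  have hεa : ε ^ 3 / ((l : ℝ) + 1) = a * ε := by rw [ha]; ring
  have hμlt : (μ {z | a ≤ h z}).toReal < ε := by
    by_contra hcon
    push_neg at hcon
    have h7 : a * ε ≤ a * (μ {z | a ≤ h z}).toReal :=
      mul_le_mul_of_nonneg_left hcon ha0.le
    rw [hinth, measureReal_def] at hmark
    rw [hεa] at hsumV
    linarith
  have hScompl : (μ Sᶜ).toReal < ε :=
    lt_of_le_of_lt (ENNReal.toReal_mono (measure_ne_top _ _) (measure_mono hsub)) hμlt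
  have hadd := measure_add_measure_compl (μ := μ) hS_meas
  have htr : (μ S).toReal + (μ Sᶜ).toReal = 1 := by
    rw [← ENNReal.toReal_add (measure_ne_top _ _) (measure_ne_top _ _), hadd]
    simp
  refine ENNReal.ofReal_le_of_le_toReal ?_
  linarith


/-- **Near-independence gives ℓ¹-closeness of disintegration measures.** For every `l` and
`ε > 0` there is `δ > 0` such that for every standard Borel probability space `(X, 𝔅, μ)`,
every finite measurable partition `P` of `X` with (at most) `l` atoms, and every
sub-σ-algebra `𝔉 ⊆ 𝔅` with `H_μ(P|𝔉) > H_μ(P) - δ`, the set of points `z` whose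
disintegration measure `μ_z` of `μ` over `𝔉` satisfies
`∑ᵢ |μ(Pᵢ) - μ_z(Pᵢ)| < ε` has `μ`-measure at least `1 - ε`. -/
theorem ellOne_close_of_almostIndependent (l : ℕ) (ε : ℝ) (hε : 0 < ε) :
    ∃ δ : ℝ, 0 < δ ∧
      ∀ (X : Type) (mX : MeasurableSpace X), ∀ (_ : @StandardBorelSpace X mX)
        (μ : @Measure X mX), ∀ (_ : @IsProbabilityMeasure X mX μ)
        (P : Fin l → Set X), IsPartition (mX := mX) P →
        ∀ F : MeasurableSpace X, F ≤ mX →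
          condEntropyAlg (mX := mX) μ F P > entropyH (mX := mX) μ P - δ →
          ENNReal.ofReal (1 - ε) ≤
            μ {z : X | ∑ i : Fin l,
              |(μ (P i)).toReal - ((condExpKernel (mΩ := mX) μ F z) (P i)).toReal| < ε} := by
  have hlog2 : (0:ℝ) < Real.log 2 := Real.log_pos one_lt_two
  refine ⟨ε ^ 3 / (2 * ((l : ℝ) + 1) * Real.log 2), by positivity, ?_⟩
  intro X mX hsb μ hprob P hPart F hF hcond
  exact @aux_main X F mX hsb μ hprob hF l ε hε P (@IsPartition.meas X mX (Fin l) P hPart) hcond
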